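/- Let A be a finite algebra with congruence θ. If θ is strongly abelian (the strong term condition SA(θ,θ) holds), then for every term t and every choice of θ-classes C₁,…,Cₙ,C₀ with t(C₁×⋯×Cₙ) ⊆ C₀, there exist equivalence relations Eᵢ on Cᵢ such that for all xᵢ,yᵢ ∈ Cᵢ: t(x₁,…,xₙ) = t(y₁,…,yₙ) iff (xᵢ,yᵢ) ∈ Eᵢ for all i. -/

import Mathlib

/-- If `θ` is a strongly abelian congruence of a finite algebra (the strong term
condition holds for the term operation `t`), then on any box of `θ`-classes
`C₁ × ⋯ × Cₙ` mapped by `t` into a `θ`-class `C₀`, the action of `t` is rectangular: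
there are equivalence relations `Eᵢ` on the classes `Cᵢ` such that
`t x = t y ↔ ∀ i, (xᵢ, yᵢ) ∈ Eᵢ`. -/
theorem stmt16 {A : Type*} [Fintype A] (θ : A → A → Prop) (hθ : Equivalence θ)
    {n : ℕ} (t : (Fin n → A) → A)
    -- the strong term condition for `t`, for every choice of a distinguished slot
    -- `i` and a block `S` of slots (the remaining slots being parameters):
    (hTC : ∀ (i : Fin n) (S : Finset (Fin n)), i ∉ S →
      ∀ (u v : A) (a b c d : Fin n → A),
        θ u v → (∀ j, θ (a j) (b j)) → (∀ j, θ (c j) (d j)) →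
        ((t (fun j => if j = i then u else if j ∈ S then a j else c j) =
            t (fun j => if j = i then v else if j ∈ S then b j else c j) →
          t (fun j => if j = i then u else if j ∈ S then a j else d j) =
            t (fun j => if j = i then v else if j ∈ S then b j else d j)) ∧
         (t (fun j => if j = i then u else if j ∈ S then a j else c j) =
            t (fun j => if j = i then v else if j ∈ S then b j else c j) →
          t (fun j => if j = i then u else if j ∈ S then a j else c j) =
            t (fun j => if j = i then u else if j ∈ S then b j else c j))))
    (C : Fin n → Set A) (C₀ : Set A)
    (hC : ∀ j, ∃ a : A, C j = {x | θ a x})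
    (hC₀ : ∃ a : A, C₀ = {x | θ a x})
    (hmap : ∀ x : Fin n → A, (∀ j, x j ∈ C j) → t x ∈ C₀) :
    ∃ E : Fin n → A → A → Prop,
      (∀ j, (∀ x ∈ C j, E j x x) ∧ (∀ x y : A, E j x y → E j y x) ∧
        (∀ x y w : A, E j x y → E j y w → E j x w)) ∧
      ∀ x y : Fin n → A, (∀ j, x j ∈ C j) → (∀ j, y j ∈ C j) →
        (t x = t y ↔ ∀ j, E j (x j) (y j)) := by
  classical
  -- members of the same class are θ-related
  have hrel : ∀ (j : Fin n) (x y : A), x ∈ C j → y ∈ C j → θ x y := by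
    intro j x y hx hy
    obtain ⟨a, ha⟩ := hC j
    rw [ha] at hx hy
    exact hθ.trans (hθ.symm hx) hy
  -- a base point in the box
  choose p hp using hC
  have hpC : ∀ j, p j ∈ C j := by
    intro j; rw [hp j]; exact hθ.refl _
  -- parameter-change lemma (from the first part of the TC)
  have key : ∀ (i : Fin n) (u v : A) (z w : Fin n → A),
      u ∈ C i → v ∈ C i → (∀ k, z k ∈ C k) → (∀ k, w k ∈ C k) →
      t (fun k => if k = i then u else z k) = t (fun k => if k = i then v else z k) →
      t (fun k => if k = i then u else w k) = t (fun k => if k = i then v else w k) := by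
    intro i u v z w hu hv hz hw h
    have := (hTC i ∅ (by simp) u v z z z w (hrel i u v hu hv)
        (fun j => hθ.refl _) (fun j => hrel j (z j) (w j) (hz j) (hw j))).1
    simpa using this h
  -- one-step lemma (from the second part of the TC)
  have onestep : ∀ (x y : Fin n → A), (∀ k, x k ∈ C k) → (∀ k, y k ∈ C k) →
      t x = t y → ∀ i : Fin n,
      t x = t (fun k => if k = i then x i else y k) := by
    intro x y hx hy h i
    have hmem : i ∉ (Finset.univ.erase i) := by simp
    have := (hTC i (Finset.univ.erase i) hmem (x i) (y i) x y x x
        (hrel i (x i) (y i) (hx i) (hy i))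
        (fun j => hrel j (x j) (y j) (hx j) (hy j)) (fun j => hθ.refl _)).2
    have e1 : (fun j => if j = i then x i else if j ∈ Finset.univ.erase i then x j else x j)
        = x := by
      funext j; by_cases hj : j = i <;> simp [hj]
    have e2 : (fun j => if j = i then y i else if j ∈ Finset.univ.erase i then y j else x j)
        = y := by
      funext j; by_cases hj : j = i <;> simp [hj]
    have e3 : (fun j => if j = i then x i else if j ∈ Finset.univ.erase i then y j else x j)
        = (fun k => if k = i then x i else y k) := by
      funext j; by_cases hj : j = i <;> simp [hj]
    rw [e1, e2, e3] at this
    exact this h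
  -- the equivalence relations
  refine ⟨fun j x y => x ∈ C j ∧ y ∈ C j ∧
      t (fun k => if k = j then x else p k) = t (fun k => if k = j then y else p k),
    ?_, ?_⟩
  · intro j
    refine ⟨fun x hx => ⟨hx, hx, rfl⟩,
      fun x y ⟨hx, hy, h⟩ => ⟨hy, hx, h.symm⟩,
      fun x y w ⟨hx, hy, h⟩ ⟨_, hw, h'⟩ => ⟨hx, hw, h.trans h'⟩⟩
  · intro x y hx hy
    have hsub : ∀ (i : Fin n) (u : A) (w : Fin n → A), u ∈ C i → (∀ k, w k ∈ C k) →
        ∀ k, (fun k => if k = i then u else w k) k ∈ C k := by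
      intro i u w hu hw k
      by_cases hk : k = i
      · subst hk; simpa using hu
      · simpa [hk] using hw k
    constructor
    · intro h j
      refine ⟨hx j, hy j, ?_⟩
      -- from onestep: t x = t (y with slot j set to x j), and t x = t y
      have h1 := onestep x y hx hy h j
      have h2 : t (fun k => if k = j then x j else y k)
          = t (fun k => if k = j then y j else y k) := by
        have : (fun k => if k = j then y j else y k) = y := by
          funext k; by_cases hk : k = j <;> simp [hk]
        rw [this, ← h1, h]
      exact key j (x j) (y j) y p (hx j) (hy j) hy hpC h2
    · intro h
      -- chain through hybrids
      have keyp : ∀ (i : Fin n) (w : Fin n → A), (∀ k, w k ∈ C k) →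
          t (fun k => if k = i then x i else w k) = t (fun k => if k = i then y i else w k) := by
        intro i w hw
        exact key i (x i) (y i) p w (hx i) (hy i) hpC hw (h i).2.2
      have main : ∀ m : ℕ, m ≤ n →
          t x = t (fun j => if (j : ℕ) < m then y j else x j) := by
        intro m
        induction m with
        | zero =>
          intro _
          have e0 : (fun j : Fin n => if (j : ℕ) < 0 then y j else x j) = x := by
            funext j; simp
          rw [e0]
        | succ m ih =>
          intro hm
          have hm' : m < n := hm
          set i : Fin n := ⟨m, hm'⟩ with hi
          set z : Fin n → A := fun j => if (j : ℕ) < m then y j else x j with hz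
          have hzC : ∀ k, z k ∈ C k := by
            intro k; by_cases hk : (k : ℕ) < m <;> simp [hz, hk, hx k, hy k]
          have e1 : (fun k => if k = i then x i else z k) = z := by
            funext k
            by_cases hk : k = i
            · subst hk; simp [hz, hi]
            · simp [hk]
          have e2 : (fun k => if k = i then y i else z k)
              = (fun j : Fin n => if (j : ℕ) < m + 1 then y j else x j) := by
            funext k
            by_cases hk : k = i
            · subst hk; simp [hz, hi]
            · have hki : (k : ℕ) ≠ m := fun hkm => hk (Fin.ext hkm)
              have : ((k : ℕ) < m + 1) ↔ ((k : ℕ) < m) := by omega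
              simp [hk, hz, this]
          calc t x = t z := ih (le_of_lt hm')
            _ = t (fun k => if k = i then x i else z k) := by rw [e1]
            _ = t (fun k => if k = i then y i else z k) := keyp i z hzC
            _ = _ := by rw [e2]
      have := main n le_rfl
      have ey : (fun j : Fin n => if (j : ℕ) < n then y j else x j) = y := by
        funext j; simp [j.isLt]
      rwa [ey] at this
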